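/- arXiv:2507.09646 — 2 statements merged into one kernel-verified Lean document; each statement's English description precedes it below -/
import Mathlib

section
/- For the constrained lifted system z_{k+1} = A·z_k with constraint Ψ(z_0) = z_{0,1}² − z_{0,3} = 0, the set of constrained solutions equals the image under Φ of the solution set of the original nonlinear system x_{k+1} = (a·x1, b·x2 − c·x1²); i.e., Φ(𝓑) = 𝓑̂_𝓚, where 𝓑 is the set of sequences x : ℕ → ℝ² satisfying the nonlinear recursion, 𝓑̂_𝓚 is the set of sequences z : ℕ → ℝ³ satisfying z_{k+1} = A·z_k and Ψ(z_0) = 0, and Φ acts pointwise on sequences. -/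
/-- The set of constrained lifted solutions equals the image under `Φ` of the
solution set of the original nonlinear system: `Φ(𝓑) = 𝓑̂_𝓚`. -/
theorem constrained_behavior_equality (a b c : ℝ)
    (f : (Fin 2 → ℝ) → (Fin 2 → ℝ))
    (hf : ∀ x, f x = ![a * x 0, b * x 1 - c * (x 0) ^ 2])
    (Φ : (Fin 2 → ℝ) → (Fin 3 → ℝ))
    (hΦ : ∀ x, Φ x = ![x 0, x 1, (x 0) ^ 2])
    (A : Matrix (Fin 3) (Fin 3) ℝ)
    (hA : A = !![a, 0, 0; 0, b, -c; 0, 0, a ^ 2])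
    (Ψ : (Fin 3 → ℝ) → ℝ) (hΨ : ∀ z, Ψ z = (z 0) ^ 2 - z 2)
    (B : Set (ℕ → Fin 2 → ℝ)) (hB : B = {x | ∀ k, x (k + 1) = f (x k)})
    (BK : Set (ℕ → Fin 3 → ℝ))
    (hBK : BK = {z | (∀ k, z (k + 1) = A.mulVec (z k)) ∧ Ψ (z 0) = 0}) :
    (fun x : ℕ → Fin 2 → ℝ => fun k => Φ (x k)) '' B = BK := by
  subst hA hB hBK
  ext z
  simp only [Set.mem_image, Set.mem_setOf_eq]
  constructor
  · rintro ⟨x, hx, rfl⟩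
    refine ⟨fun k => ?_, ?_⟩
    · funext i
      simp only [hΦ, hx, hf]
      fin_cases i <;>
        simp [Matrix.mulVec, dotProduct, Fin.sum_univ_succ] <;> ring
    · simp only [hΨ, hΦ]; simp
  · rintro ⟨hrec, hc⟩
    rw [hΨ] at hc
    have hinv : ∀ k, z k 2 = (z k 0) ^ 2 := by
      intro k
      induction k with
      | zero => linarith
      | succ n ih =>
        rw [hrec n]
        simp [Matrix.mulVec, dotProduct, Fin.sum_univ_succ, ih]
        ring
    refine ⟨fun k => ![z k 0, z k 1], fun k => ?_, ?_⟩
    · funext i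
      rw [hf]
      fin_cases i <;>
        · simp only [Matrix.cons_val_zero, Matrix.cons_val_one, Matrix.head_cons]
          rw [hrec k]
          simp [Matrix.mulVec, dotProduct, Fin.sum_univ_succ, hinv k]
          try ring
    · funext k
      rw [hΦ]
      funext i
      fin_cases i <;> simp [hinv k]
end

section
/- There exists a trajectory of the lifted system z_{k+1} = A·z_k (with A as above and a,b,c nonzero) whose initial condition violates the constraint Ψ(z_0) ≠ 0 and which does not equal Φ(x) for any solution x of the original nonlinear system; hence the inclusion Φ(𝓑) ⊆ 𝓑_𝓚 of solution sets is strict. -/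
/-- There exists a trajectory of the unconstrained lifted system whose initial
condition violates the constraint `Ψ(z₀) = 0` and which is not the lift of any
solution of the original nonlinear system; hence `Φ(𝓑) ⊊ 𝓑_𝓚`. -/
theorem noncompliant_trajectory_exists (a b c : ℝ)
    (ha : a ≠ 0) (hb : b ≠ 0) (hc : c ≠ 0)
    (f : (Fin 2 → ℝ) → (Fin 2 → ℝ))
    (hf : ∀ x, f x = ![a * x 0, b * x 1 - c * (x 0) ^ 2])
    (Φ : (Fin 2 → ℝ) → (Fin 3 → ℝ))
    (hΦ : ∀ x, Φ x = ![x 0, x 1, (x 0) ^ 2])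
    (A : Matrix (Fin 3) (Fin 3) ℝ)
    (hA : A = !![a, 0, 0; 0, b, -c; 0, 0, a ^ 2])
    (Ψ : (Fin 3 → ℝ) → ℝ) (hΨ : ∀ z, Ψ z = (z 0) ^ 2 - z 2) :
    ∃ z : ℕ → Fin 3 → ℝ,
      (∀ k, z (k + 1) = A.mulVec (z k)) ∧ Ψ (z 0) ≠ 0 ∧
      ∀ x : ℕ → Fin 2 → ℝ, (∀ k, x (k + 1) = f (x k)) →
        (fun k => Φ (x k)) ≠ z := by
  refine ⟨fun k => (A.mulVec)^[k] ![0, 0, 1], fun k => ?_, ?_, ?_⟩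
  · simp [Function.iterate_succ_apply']
  · simp [hΨ]
  · intro x hx heq
    have h0 := congrFun heq 0
    simp only [Function.iterate_zero, id_eq] at h0
    have h1 : Φ (x 0) 0 = 0 := by rw [h0]; simp
    have h2 : Φ (x 0) 2 = 1 := by rw [h0]; simp
    rw [hΦ] at h1 h2
    simp at h1 h2
    rw [h1] at h2
    norm_num at h2
end
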